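/- Let χ₀ : ℝ^n → ℂ be a Schwartz function, let R₀ > 0, and let ξ₀ ∈ ℝ^n with ‖ξ₀‖ > 2R₀. Then for every N ∈ ℕ there exists C_N > 0 such that for all h ∈ (0,1], ∫_{{ξ ∈ ℝ^n : ‖ξ‖ ≤ 2R₀/h}} |χ̂₀(ξ − ξ₀/h)|² dξ ≤ C_N h^N. -/

import Mathlib

open Real MeasureTheory
open scoped RealInnerProductSpace FourierTransform

/-- The Fourier transform `û(ξ) := (2π)^{-n/2} ∫ e^{-i⟨x,ξ⟩} u(x) dx`. -/
noncomputable def FT {n : ℕ} (u : EuclideanSpace ℝ (Fin n) → ℂ)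
    (ξ : EuclideanSpace ℝ (Fin n)) : ℂ :=
  ((2 * π) ^ (-(n : ℝ) / 2) : ℝ) •
    ∫ x : EuclideanSpace ℝ (Fin n), Complex.exp (-Complex.I * (⟪x, ξ⟫ : ℝ)) * u x

lemma FT_eq_fourier {n : ℕ} (u : EuclideanSpace ℝ (Fin n) → ℂ)
    (ξ : EuclideanSpace ℝ (Fin n)) :
    FT u ξ = ((2 * π) ^ (-(n : ℝ) / 2) : ℝ) • (𝓕 u) ((2 * π)⁻¹ • ξ) := by
  rw [FT, Real.fourier_eq']
  congr 1
  refine congrArg _ (funext fun x => ?_)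
  rw [real_inner_smul_right, smul_eq_mul]
  congr 2
  have hπ : (π : ℂ) ≠ 0 := by exact_mod_cast Real.pi_ne_zero
  push_cast
  field_simp

/-- For a Schwartz function `χ₀`, `R₀ > 0` and `ξ₀` with `‖ξ₀‖ > 2R₀`:
for every `N` there is `C_N > 0` such that for all `h ∈ (0,1]`,
`∫_{‖ξ‖ ≤ 2R₀/h} |χ̂₀(ξ − ξ₀/h)|² dξ ≤ C_N h^N`. -/
theorem stmt_10 {n : ℕ} (χ₀ : SchwartzMap (EuclideanSpace ℝ (Fin n)) ℂ)
    (R₀ : ℝ) (hR₀ : 0 < R₀) (ξ₀ : EuclideanSpace ℝ (Fin n)) (hξ₀ : 2 * R₀ < ‖ξ₀‖) :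
    ∀ N : ℕ, ∃ C > (0:ℝ), ∀ h ∈ Set.Ioc (0:ℝ) 1,
      (∫ ξ in {ξ : EuclideanSpace ℝ (Fin n) | ‖ξ‖ ≤ 2 * R₀ / h},
        ‖FT (⇑χ₀) (ξ - h⁻¹ • ξ₀)‖ ^ 2) ≤ C * h ^ N := by
  intro N
  set δ : ℝ := ‖ξ₀‖ - 2 * R₀ with hδdef
  have hδ : 0 < δ := by simp [hδdef]; linarith
  set g := SchwartzMap.fourierTransformCLM ℝ χ₀ with hg
  set k : ℕ := N + n with hk
  obtain ⟨D, hD0, hD⟩ := g.decay k 0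
  have hc0 : (0:ℝ) < (2 * π) ^ (-(n : ℝ) / 2) :=
    Real.rpow_pos_of_pos (by positivity) _
  set c : ℝ := (2 * π) ^ (-(n : ℝ) / 2) with hc
  set A : ℝ := c * (D * (2 * π / δ) ^ k) with hA
  have hA0 : 0 < A := by
    apply mul_pos hc0
    exact mul_pos hD0 (pow_pos (by positivity) k)
  set V : ℝ := (volume (Metric.closedBall (0 : EuclideanSpace ℝ (Fin n)) 1)).toReal with hV
  have hV0 : 0 ≤ V := ENNReal.toReal_nonneg
  refine ⟨A ^ 2 * (2 * R₀) ^ n * V + 1, by positivity, ?_⟩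
  rintro h ⟨hh0, hh1⟩
  -- pointwise bound
  have key : ∀ ξ : EuclideanSpace ℝ (Fin n), ‖ξ‖ ≤ 2 * R₀ / h →
      ‖FT (⇑χ₀) (ξ - h⁻¹ • ξ₀)‖ ^ 2 ≤ (A * h ^ k) ^ 2 := by
    intro ξ hξ
    have hη : δ / h ≤ ‖ξ - h⁻¹ • ξ₀‖ := by
      have h1 : ‖h⁻¹ • ξ₀‖ - ‖ξ‖ ≤ ‖h⁻¹ • ξ₀ - ξ‖ := norm_sub_norm_le _ _
      rw [norm_sub_rev] at h1
      have h2 : ‖h⁻¹ • ξ₀‖ = ‖ξ₀‖ / h := by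
        rw [norm_smul, norm_inv, Real.norm_eq_abs, abs_of_pos hh0, inv_mul_eq_div]
      rw [h2] at h1
      have : δ / h = ‖ξ₀‖ / h - 2 * R₀ / h := by rw [hδdef]; ring
      linarith
    set x := (2 * π)⁻¹ • (ξ - h⁻¹ • ξ₀) with hx
    have hFT : ‖FT (⇑χ₀) (ξ - h⁻¹ • ξ₀)‖ = c * ‖g x‖ := by
      rw [FT_eq_fourier, norm_smul, Real.norm_eq_abs, abs_of_pos hc0]
      rfl
    have hxnorm : δ / (2 * π * h) ≤ ‖x‖ := by
      rw [hx, norm_smul, Real.norm_eq_abs, abs_of_pos (by positivity : (0:ℝ) < (2*π)⁻¹)]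
      calc δ / (2 * π * h) = (2 * π)⁻¹ * (δ / h) := by ring
        _ ≤ (2 * π)⁻¹ * ‖ξ - h⁻¹ • ξ₀‖ := by
            apply mul_le_mul_of_nonneg_left hη (by positivity)
    have hm0 : (0:ℝ) < δ / (2 * π * h) := by positivity
    have hgx : ‖g x‖ ≤ D * (2 * π / δ) ^ k * h ^ k := by
      have h1 := hD x
      rw [norm_iteratedFDeriv_zero] at h1
      have h2 : (δ / (2 * π * h)) ^ k * ‖g x‖ ≤ ‖x‖ ^ k * ‖g x‖ :=
        mul_le_mul_of_nonneg_right (pow_le_pow_left₀ hm0.le hxnorm k) (norm_nonneg _)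
      have h3 : (δ / (2 * π * h)) ^ k * ‖g x‖ ≤ D := h2.trans h1
      rw [← le_div_iff₀' (pow_pos hm0 k)] at h3
      calc ‖g x‖ ≤ D / (δ / (2 * π * h)) ^ k := h3
        _ = D * (2 * π / δ) ^ k * h ^ k := by
            rw [div_pow, div_div_eq_mul_div, div_pow, mul_pow]
            field_simp
    have hFTle : ‖FT (⇑χ₀) (ξ - h⁻¹ • ξ₀)‖ ≤ A * h ^ k := by
      rw [hFT]
      calc c * ‖g x‖ ≤ c * (D * (2 * π / δ) ^ k * h ^ k) :=
          mul_le_mul_of_nonneg_left hgx hc0.le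
        _ = A * h ^ k := by rw [hA]; ring
    exact pow_le_pow_left₀ (norm_nonneg _) hFTle 2
  -- measure of the set
  have hset : {ξ : EuclideanSpace ℝ (Fin n) | ‖ξ‖ ≤ 2 * R₀ / h}
      = Metric.closedBall 0 (2 * R₀ / h) := by
    ext ξ; simp [Metric.mem_closedBall, dist_zero_right]
  have hr0 : (0:ℝ) ≤ 2 * R₀ / h := by positivity
  have hμlt : volume {ξ : EuclideanSpace ℝ (Fin n) | ‖ξ‖ ≤ 2 * R₀ / h} < ⊤ := by
    rw [hset]; exact measure_closedBall_lt_top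
  have hμ : (volume {ξ : EuclideanSpace ℝ (Fin n) | ‖ξ‖ ≤ 2 * R₀ / h}).toReal
      = (2 * R₀ / h) ^ n * V := by
    rw [hset, Measure.addHaar_closedBall' _ _ hr0, finrank_euclideanSpace_fin,
      ENNReal.toReal_mul, ENNReal.toReal_ofReal (pow_nonneg hr0 n)]
  -- integral bound
  have hcont : Continuous (fun ξ : EuclideanSpace ℝ (Fin n) =>
      ‖FT (⇑χ₀) (ξ - h⁻¹ • ξ₀)‖ ^ 2) := by
    have : Continuous (FT (⇑χ₀)) := by
      have : FT (⇑χ₀) = fun ξ => (c : ℝ) • (g ((2 * π)⁻¹ • ξ)) := by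
        funext ξ
        rw [FT_eq_fourier, hg, SchwartzMap.fourierTransformCLM_apply, SchwartzMap.fourier_coe]
      rw [this]
      exact ((g.continuous.comp (continuous_const_smul ((2 * π)⁻¹ : ℝ)))).const_smul c
    exact ((this.comp (continuous_id.sub continuous_const)).norm.pow 2)
  have hbound := norm_setIntegral_le_of_norm_le_const (μ := volume)
    (s := {ξ : EuclideanSpace ℝ (Fin n) | ‖ξ‖ ≤ 2 * R₀ / h})
    (f := fun ξ => ‖FT (⇑χ₀) (ξ - h⁻¹ • ξ₀)‖ ^ 2) (C := (A * h ^ k) ^ 2) hμlt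
    (fun ξ hξ => by
      rw [Real.norm_eq_abs, abs_of_nonneg (by positivity)]
      exact key ξ hξ)
  have hint : (∫ ξ in {ξ : EuclideanSpace ℝ (Fin n) | ‖ξ‖ ≤ 2 * R₀ / h},
      ‖FT (⇑χ₀) (ξ - h⁻¹ • ξ₀)‖ ^ 2)
      ≤ (A * h ^ k) ^ 2 * ((2 * R₀ / h) ^ n * V) := by
    calc (∫ ξ in {ξ : EuclideanSpace ℝ (Fin n) | ‖ξ‖ ≤ 2 * R₀ / h},
        ‖FT (⇑χ₀) (ξ - h⁻¹ • ξ₀)‖ ^ 2)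
        ≤ ‖∫ ξ in {ξ : EuclideanSpace ℝ (Fin n) | ‖ξ‖ ≤ 2 * R₀ / h},
          ‖FT (⇑χ₀) (ξ - h⁻¹ • ξ₀)‖ ^ 2‖ := le_abs_self _
      _ ≤ (A * h ^ k) ^ 2 * (volume {ξ : EuclideanSpace ℝ (Fin n) | ‖ξ‖ ≤ 2 * R₀ / h}).toReal :=
          hbound
      _ = (A * h ^ k) ^ 2 * ((2 * R₀ / h) ^ n * V) := by rw [hμ]
  -- final arithmetic
  have hfin : (A * h ^ k) ^ 2 * ((2 * R₀ / h) ^ n * V)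
      ≤ (A ^ 2 * (2 * R₀) ^ n * V + 1) * h ^ N := by
    have hhne : h ≠ 0 := hh0.ne'
    have hpow : h ^ (k * 2) = h ^ (2 * N + n) * h ^ n := by
      rw [← pow_add]; congr 1; omega
    have e1 : (A * h ^ k) ^ 2 * ((2 * R₀ / h) ^ n * V)
        = A ^ 2 * (2 * R₀) ^ n * V * h ^ (2 * N + n) := by
      rw [mul_pow, ← pow_mul, hpow, div_pow]
      field_simp
    rw [e1]
    have e3 : h ^ (2 * N + n) ≤ h ^ N :=
      pow_le_pow_of_le_one hh0.le hh1 (by omega)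
    have : A ^ 2 * (2 * R₀) ^ n * V * h ^ (2 * N + n)
        ≤ A ^ 2 * (2 * R₀) ^ n * V * h ^ N :=
      mul_le_mul_of_nonneg_left e3 (by positivity)
    nlinarith [pow_nonneg hh0.le N]
  linarith
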